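/- If g ∈ BC(ℝ,X) and the circular spectrum σ(g) is empty, then g = 0. -/

import Mathlib

open Set MeasureTheory intervalIntegral
open scoped BoundedContinuousFunction ZeroAtInfty

noncomputable section

/-- The translation operator `S` on `BC(ℝ, X)`: `(S g)(t) = g (t + 1)`.
It is an invertible isometry of the space of bounded continuous functions. -/
def transOp (X : Type*) [NormedAddCommGroup X] [NormedSpace ℂ X] :
    (ℝ →ᵇ X) →L[ℂ] (ℝ →ᵇ X) :=
  LinearMap.mkContinuous
    { toFun := fun g => g.compContinuous ⟨fun t : ℝ => t + 1, by continuity⟩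
      map_add' := by intro g h; ext t; simp
      map_smul' := by intro c g; ext t; simp }
    1 (fun g => by
      simpa using g.norm_compContinuous_le ⟨fun t : ℝ => t + 1, by continuity⟩)

/-- The circular spectrum of `g ∈ BC(ℝ, X)`: the set of points `ξ₀` of the unit circle
`Γ = {z : ‖z‖ = 1}` such that the analytic function `λ ↦ R(λ, S) g` on `ℂ \ Γ`
admits no analytic extension to any neighborhood of `ξ₀`. -/
def circularSpectrum {X : Type*} [NormedAddCommGroup X] [NormedSpace ℂ X]
    (g : ℝ →ᵇ X) : Set ℂ :=
  {ξ : ℂ | ‖ξ‖ = 1 ∧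
    ¬ ∃ U : Set ℂ, IsOpen U ∧ ξ ∈ U ∧ ∃ H : ℂ → (ℝ →ᵇ X),
      AnalyticOnNhd ℂ H U ∧ ∀ z ∈ U, ‖z‖ ≠ 1 → H z = resolvent (transOp X) z g}

/-- The inverse translation operator: `(S⁻¹ g)(t) = g (t - 1)`. -/
def transOpInv (X : Type*) [NormedAddCommGroup X] [NormedSpace ℂ X] :
    (ℝ →ᵇ X) →L[ℂ] (ℝ →ᵇ X) :=
  LinearMap.mkContinuous
    { toFun := fun g => g.compContinuous ⟨fun t : ℝ => t - 1, by continuity⟩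
      map_add' := by intro g h; ext t; simp
      map_smul' := by intro c g; ext t; simp }
    1 (fun g => by
      simpa using g.norm_compContinuous_le ⟨fun t : ℝ => t - 1, by continuity⟩)

/-- `transOp` as a unit of the algebra of bounded operators. -/
def transUnit (X : Type*) [NormedAddCommGroup X] [NormedSpace ℂ X] :
    ((ℝ →ᵇ X) →L[ℂ] (ℝ →ᵇ X))ˣ where
  val := transOp X
  inv := transOpInv X
  val_inv := by
    ext g t
    simp [transOp, transOpInv, ContinuousLinearMap.mul_apply]
  inv_val := by
    ext g t
    simp [transOp, transOpInv, ContinuousLinearMap.mul_apply]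

lemma norm_transOp_le (X : Type*) [NormedAddCommGroup X] [NormedSpace ℂ X] :
    ‖transOp X‖ ≤ 1 :=
  LinearMap.mkContinuous_norm_le _ zero_le_one _

lemma norm_transOpInv_le (X : Type*) [NormedAddCommGroup X] [NormedSpace ℂ X] :
    ‖transOpInv X‖ ≤ 1 :=
  LinearMap.mkContinuous_norm_le _ zero_le_one _

lemma dense_norm_ne_one : Dense {z : ℂ | ‖z‖ ≠ 1} := by
  intro z
  rcases eq_or_ne ‖z‖ 1 with hz | hz
  · rw [Metric.mem_closure_iff]
    intro ε hε
    set δ : ℝ := min (ε / 2) (1 / 2) with hδ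
    have hδ0 : 0 < δ := lt_min (by linarith) (by norm_num)
    have hδ1 : δ < 1 := lt_of_le_of_lt (min_le_right _ _) (by norm_num)
    refine ⟨((1 - δ : ℝ) : ℂ) * z, ?_, ?_⟩
    · show ‖((1 - δ : ℝ) : ℂ) * z‖ ≠ 1
      rw [norm_mul, hz, mul_one, Complex.norm_real, Real.norm_eq_abs,
        abs_of_pos (by linarith)]
      intro hcon; linarith
    · have : z - ((1 - δ : ℝ) : ℂ) * z = (δ : ℂ) * z := by push_cast; ring
      rw [dist_eq_norm, this, norm_mul, hz, mul_one]
      simp only [Complex.norm_real, Real.norm_eq_abs, abs_of_pos hδ0]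
      calc δ ≤ ε / 2 := min_le_left _ _
        _ < ε := by linarith
  · exact subset_closure hz

/-- Two continuous functions that agree off the unit circle agree on an open set. -/
lemma eq_on_open_of_eq_off_circle {Y : Type*} [NormedAddCommGroup Y]
    {V : Set ℂ} (hV : IsOpen V) {H₁ H₂ : ℂ → Y}
    (h₁ : ContinuousOn H₁ V) (h₂ : ContinuousOn H₂ V)
    (heq : ∀ z ∈ V, ‖z‖ ≠ 1 → H₁ z = H₂ z) {z : ℂ} (hz : z ∈ V) : H₁ z = H₂ z := by
  set s : Set ℂ := V ∩ {w | ‖w‖ ≠ 1} with hs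
  have hzc : z ∈ closure s := dense_norm_ne_one.open_subset_closure_inter hV hz
  haveI : (nhdsWithin z s).NeBot := mem_closure_iff_nhdsWithin_neBot.mp hzc
  have hsub : s ⊆ V := inter_subset_left
  have t₁ : Filter.Tendsto H₁ (nhdsWithin z s) (nhds (H₁ z)) :=
    ((h₁ z hz).mono hsub).tendsto
  have t₂ : Filter.Tendsto H₂ (nhdsWithin z s) (nhds (H₂ z)) :=
    ((h₂ z hz).mono hsub).tendsto
  have hee : H₁ =ᶠ[nhdsWithin z s] H₂ :=
    Filter.eventually_of_mem self_mem_nhdsWithin fun w hw => heq w hw.1 hw.2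
  exact tendsto_nhds_unique (t₁.congr' hee) t₂

/-- If `g ∈ BC(ℝ, X)` has empty circular spectrum then `g = 0`. -/
theorem eq_zero_of_circularSpectrum_empty {X : Type*} [NormedAddCommGroup X] [NormedSpace ℂ X] [CompleteSpace X]
    (g : ℝ →ᵇ X) (h : circularSpectrum g = ∅) : g = 0 := by
  classical
  set A := (ℝ →ᵇ X) →L[ℂ] (ℝ →ᵇ X)
  set S : A := transOp X with hS
  have hnorm1 : ‖(1 : A)‖ ≤ 1 := by
    rw [ContinuousLinearMap.one_def]; exact ContinuousLinearMap.norm_id_le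
  -- every point off the circle is in the resolvent set
  have hres : ∀ z : ℂ, ‖z‖ ≠ 1 → z ∈ resolventSet ℂ S := by
    intro z hz
    rcases hz.lt_or_gt with hlt | hgt
    · -- inside the disk: use invertibility of S
      have hnotmem : z ∉ spectrum ℂ S := by
        intro hmem
        rcases eq_or_ne z 0 with rfl | hz0
        · exact ((spectrum.zero_mem_iff ℂ).mp hmem) ⟨transUnit X, rfl⟩
        · have hmem' : ((Units.mk0 z hz0 : ℂˣ) : ℂ) ∈ spectrum ℂ ((transUnit X : Aˣ) : A) :=
            hmem
          have hinv := spectrum.inv_mem_iff.mp hmem'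
          have hle : ‖((Units.mk0 z hz0)⁻¹ : ℂˣ).val‖ ≤
              ‖(((transUnit X)⁻¹ : Aˣ) : A)‖ * ‖(1 : A)‖ :=
            spectrum.norm_le_norm_mul_of_mem hinv
          have hval : (((transUnit X)⁻¹ : Aˣ) : A) = transOpInv X := rfl
          rw [hval] at hle
          have hzn : ‖((Units.mk0 z hz0)⁻¹ : ℂˣ).val‖ = ‖z‖⁻¹ := by
            simp
          rw [hzn] at hle
          have h1 : (1 : ℝ) < ‖z‖⁻¹ := (one_lt_inv₀ (norm_pos_iff.mpr hz0)).mpr hlt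
          have h2 : ‖transOpInv X‖ * ‖(1 : A)‖ ≤ 1 := by
            calc ‖transOpInv X‖ * ‖(1 : A)‖ ≤ 1 * 1 :=
              mul_le_mul (norm_transOpInv_le X) hnorm1 (norm_nonneg _) zero_le_one
            _ = 1 := by norm_num
          linarith
      simpa [spectrum, Set.mem_compl_iff, not_not] using hnotmem
    · exact spectrum.mem_resolventSet_of_norm_lt_mul
        (lt_of_le_of_lt
          (by calc ‖S‖ * ‖(1 : A)‖ ≤ 1 * 1 :=
                mul_le_mul (norm_transOp_le X) hnorm1 (norm_nonneg _) zero_le_one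
              _ = 1 := by norm_num) hgt)
  -- extract local extensions at circle points
  have hext : ∀ ξ : ℂ, ‖ξ‖ = 1 → ∃ U : Set ℂ, IsOpen U ∧ ξ ∈ U ∧ ∃ H : ℂ → (ℝ →ᵇ X),
      AnalyticOnNhd ℂ H U ∧ ∀ z ∈ U, ‖z‖ ≠ 1 → H z = resolvent (transOp X) z g := by
    intro ξ hξ
    by_contra hc
    have : ξ ∈ circularSpectrum g := ⟨hξ, hc⟩
    rw [h] at this
    exact this
  choose U hUopen hUmem H hHan hHeq using hext
  -- the glued global function
  set F : ℂ → (ℝ →ᵇ X) := fun z =>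
    if hz : ‖z‖ = 1 then H z hz z else (resolvent S z) g with hF
  have hFoff : ∀ z : ℂ, ‖z‖ ≠ 1 → F z = (resolvent S z) g := fun z hz => dif_neg hz
  -- F agrees with each local extension on its domain
  have hFeq : ∀ (ξ : ℂ) (hξ : ‖ξ‖ = 1), Set.EqOn F (H ξ hξ) (U ξ hξ) := by
    intro ξ hξ z hzU
    by_cases h1 : ‖z‖ = 1
    · have hFz : F z = H z h1 z := dif_pos h1
      rw [hFz]
      have hVopen : IsOpen (U ξ hξ ∩ U z h1) := (hUopen ξ hξ).inter (hUopen z h1)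
      refine eq_on_open_of_eq_off_circle hVopen
        (((hHan z h1).continuousOn).mono inter_subset_right)
        (((hHan ξ hξ).continuousOn).mono inter_subset_left)
        (fun w hw hw1 => ?_) ⟨hzU, hUmem z h1⟩
      rw [hHeq z h1 w hw.2 hw1, hHeq ξ hξ w hw.1 hw1]
    · rw [hFoff z h1, (hHeq ξ hξ z hzU h1).symm]
  have hOpenOff : IsOpen {w : ℂ | ‖w‖ ≠ 1} := by
    have : IsClosed {w : ℂ | ‖w‖ = 1} :=
      (isClosed_singleton (x := (1 : ℝ))).preimage continuous_norm
    simpa [Set.compl_setOf] using this.isOpen_compl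
  -- F is entire
  have hFdiff : Differentiable ℂ F := by
    intro z
    by_cases h1 : ‖z‖ = 1
    · have hA : AnalyticAt ℂ (H z h1) z := hHan z h1 z (hUmem z h1)
      have hEE : H z h1 =ᶠ[nhds z] F :=
        Filter.eventuallyEq_of_mem ((hUopen z h1).mem_nhds (hUmem z h1))
          fun w hw => (hFeq z h1 hw).symm
      exact (hA.congr hEE).differentiableAt
    · have hd : DifferentiableAt ℂ (fun w => resolvent S w) z :=
        (spectrum.hasDerivAt_resolvent (hres z h1)).differentiableAt
      have hd2 : DifferentiableAt ℂ (fun w => (resolvent S w) g) z :=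
        hd.clm_apply (differentiableAt_const g)
      refine hd2.congr_of_eventuallyEq ?_
      exact Filter.eventuallyEq_of_mem (hOpenOff.mem_nhds h1) fun w hw => hFoff w hw
  -- F tends to 0 at infinity
  have hF0 : Filter.Tendsto F (Bornology.cobounded ℂ) (nhds 0) := by
    have h1 : Filter.Tendsto (fun w => (resolvent S w) g) (Bornology.cobounded ℂ) (nhds 0) := by
      have hr := spectrum.resolvent_tendsto_cobounded (𝕜 := ℂ) S
      have := ((ContinuousLinearMap.apply ℂ (ℝ →ᵇ X) g).continuous.tendsto 0).comp hr
      simpa [Function.comp_def] using this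
    refine h1.congr' ?_
    filter_upwards [eventually_cobounded_le_norm (2 : ℝ)] with w hw
    exact (hFoff w (by intro hcon; rw [hcon] at hw; linarith)).symm
  -- F has bounded range
  have hbdd : Bornology.IsBounded (Set.range F) := by
    have h2 : ∀ᶠ w in Bornology.cobounded ℂ, F w ∈ Metric.closedBall (0 : ℝ →ᵇ X) 1 :=
      hF0.eventually (Metric.closedBall_mem_nhds 0 one_pos)
    rw [Filter.eventually_iff, ← Bornology.isCobounded_def] at h2
    have hKbd : Bornology.IsBounded {w : ℂ | F w ∈ Metric.closedBall (0 : ℝ →ᵇ X) 1}ᶜ :=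
      Bornology.isBounded_compl_iff.mpr h2
    have hKcpt : IsCompact (closure {w : ℂ | F w ∈ Metric.closedBall (0 : ℝ →ᵇ X) 1}ᶜ) :=
      hKbd.isCompact_closure
    obtain ⟨C, hC⟩ := hKcpt.exists_bound_of_continuousOn hFdiff.continuous.continuousOn
    rw [isBounded_iff_forall_norm_le]
    refine ⟨max C 1, ?_⟩
    rintro x ⟨w, rfl⟩
    by_cases hw : F w ∈ Metric.closedBall (0 : ℝ →ᵇ X) 1
    · exact le_trans (by simpa [mem_closedBall_zero_iff] using hw) (le_max_right _ _)
    · exact le_trans (hC w (subset_closure hw)) (le_max_left _ _)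
  -- Liouville
  have hconst : ∀ z w : ℂ, F z = F w :=
    fun z w => hFdiff.apply_eq_apply_of_bounded hbdd z w
  have hFzero : ∀ z : ℂ, F z = 0 := by
    intro z
    have h1 : Filter.Tendsto F (Bornology.cobounded ℂ) (nhds (F z)) := by
      have : F = fun _ => F z := funext fun w => hconst w z
      rw [this]; exact tendsto_const_nhds
    exact tendsto_nhds_unique h1 hF0
  -- conclude
  have h2ne : ‖(2 : ℂ)‖ ≠ 1 := by
    rw [show ‖(2 : ℂ)‖ = 2 by simp]; norm_num
  have hr2 : (resolvent S (2 : ℂ)) g = 0 := by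
    rw [← hFoff 2 h2ne]; exact hFzero 2
  have hu : IsUnit (algebraMap ℂ A 2 - S) := hres 2 h2ne
  have hmul : (algebraMap ℂ A 2 - S) * resolvent S (2 : ℂ) = 1 := by
    rw [resolvent]; exact Ring.mul_inverse_cancel _ hu
  calc g = ((1 : A)) g := (ContinuousLinearMap.one_apply g).symm
    _ = ((algebraMap ℂ A 2 - S) * resolvent S (2 : ℂ)) g := by rw [hmul]
    _ = (algebraMap ℂ A 2 - S) ((resolvent S (2 : ℂ)) g) := ContinuousLinearMap.mul_apply _ _ _
    _ = (algebraMap ℂ A 2 - S) 0 := by rw [hr2]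
    _ = 0 := map_zero _
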